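/- Assume Var(D(θ)) ≤ E[D(θ)]² · 4α²/(2α - β)² (so the square root below is real). Then ISP_1's equilibrium expected utility with side payment p_d is at least its no-collusion equilibrium utility α E[D(θ)]²/(2α - β)² if and only if p_d ≤ ((2α + β) E[D(θ)]/(2α² - β²)) · (1 - √(1 - (2α - β)² Var(D(θ))/(4α² E[D(θ)]²))), restricting to p_d not exceeding the larger root where ISP_1's margin stays nonnegative. -/

import Mathlib

lemma stmt10_helper (α β E E2 c s : ℝ) (hα : 0 < α) (hβ : 0 < β) (hαβ : β < α)
    (hE : 0 < E) (hs0 : 0 ≤ s)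
    (hs2 : s ^ 2 = 1 - (2 * α - β) ^ 2 * (E2 - E ^ 2) / (4 * α ^ 2 * E ^ 2))
    (hclt : c < E / (2 * α - β) * (1 + s)) :
    α * E ^ 2 / (2 * α - β) ^ 2 ≤
      α * (E2 / (4 * α ^ 2) + E * (β * E / (2 * α * (2 * α - β)) - c) / α +
        (β * E / (2 * α * (2 * α - β)) - c) ^ 2)
    ↔ c ≤ E / (2 * α - β) * (1 - s) := by
  have h2ab : 0 < 2 * α - β := by linarith
  have hα0 : α ≠ 0 := ne_of_gt hα
  have h2ab0 : (2 * α - β) ≠ 0 := ne_of_gt h2ab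
  have hE0 : E ≠ 0 := ne_of_gt hE
  have hms : (E / (2 * α - β)) ^ 2 * s ^ 2
      = (E / (2 * α - β)) ^ 2 - (E2 - E ^ 2) / (4 * α ^ 2) := by
    rw [hs2]; field_simp
  have heq : α * (E2 / (4 * α ^ 2) + E * (β * E / (2 * α * (2 * α - β)) - c) / α +
        (β * E / (2 * α * (2 * α - β)) - c) ^ 2)
      - α * E ^ 2 / (2 * α - β) ^ 2
      = α * ((E / (2 * α - β) * (1 - s) - c) * (E / (2 * α - β) * (1 + s) - c)) := by
    have step1 : α * (E2 / (4 * α ^ 2) + E * (β * E / (2 * α * (2 * α - β)) - c) / α +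
          (β * E / (2 * α * (2 * α - β)) - c) ^ 2)
        - α * E ^ 2 / (2 * α - β) ^ 2
        = α * (c ^ 2 - 2 * (E / (2 * α - β)) * c + (E2 - E ^ 2) / (4 * α ^ 2)) := by
      have : α * 2 - β ≠ 0 := by linarith
      field_simp; ring
    rw [step1]; linear_combination α * hms
  constructor
  · intro h
    by_contra hcon
    push_neg at hcon
    have hx : (E / (2 * α - β) * (1 - s) - c) * (E / (2 * α - β) * (1 + s) - c) < 0 :=
      mul_neg_of_neg_of_pos (by linarith) (by linarith)
    have hy := mul_neg_of_pos_of_neg hα hx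
    linarith [heq, hy]
  · intro h
    have hx : 0 ≤ (E / (2 * α - β) * (1 - s) - c) * (E / (2 * α - β) * (1 + s) - c) :=
      mul_nonneg (by linarith) (by linarith)
    have hy := mul_nonneg hα.le hx
    linarith [heq, hy]


/-- Assume Var(D) ≤ E[D]²·4α²/(2α-β)². Then ISP₁'s equilibrium expected utility with
side payment p_d, namely α·E[(D(θ)/(2α) + βE[D]/(2α(2α-β)) - p_d(2α²-β²)/(4α²-β²))²],
is at least the no-collusion benchmark α·E[D]²/(2α-β)² if and only if
p_d ≤ ((2α+β)E[D]/(2α²-β²))·(1 - √(1 - (2α-β)²Var(D)/(4α²E[D]²))), for side payments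
below the larger root x₂ (where ISP₁'s margin stays nonnegative). -/
theorem stmt10 {Θ : Type*} [Fintype Θ] (P D : Θ → ℝ)
    (hP : ∀ θ, 0 ≤ P θ) (hPsum : ∑ θ, P θ = 1) (hD : ∀ θ, 0 ≤ D θ)
    (α β : ℝ) (hβ : 0 < β) (hαβ : β < α)
    (hED : 0 < ∑ θ, P θ * D θ)
    (hVar : (∑ θ, P θ * D θ ^ 2) - (∑ θ, P θ * D θ) ^ 2 ≤
      (∑ θ, P θ * D θ) ^ 2 * (4 * α ^ 2) / (2 * α - β) ^ 2) :
    ∀ pd : ℝ, 0 ≤ pd →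
      pd < ((2 * α + β) * (∑ θ, P θ * D θ) / (2 * α ^ 2 - β ^ 2)) *
          (1 + Real.sqrt (1 -
            (2 * α - β) ^ 2 * ((∑ θ, P θ * D θ ^ 2) - (∑ θ, P θ * D θ) ^ 2) /
              (4 * α ^ 2 * (∑ θ, P θ * D θ) ^ 2))) →
      (α * (∑ θ, P θ * D θ) ^ 2 / (2 * α - β) ^ 2 ≤
          α * ∑ θ, P θ *
            ((D θ / (2 * α) +
                β * (∑ θ', P θ' * D θ') / (2 * α * (2 * α - β))) -
              pd * (2 * α ^ 2 - β ^ 2) / (4 * α ^ 2 - β ^ 2)) ^ 2 ↔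
        pd ≤ ((2 * α + β) * (∑ θ, P θ * D θ) / (2 * α ^ 2 - β ^ 2)) *
          (1 - Real.sqrt (1 -
            (2 * α - β) ^ 2 * ((∑ θ, P θ * D θ ^ 2) - (∑ θ, P θ * D θ) ^ 2) /
              (4 * α ^ 2 * (∑ θ, P θ * D θ) ^ 2)))) := by
  intro pd hpd hlt
  have hα : 0 < α := hβ.trans hαβ
  have h2ab : 0 < 2 * α - β := by linarith
  have hα0 : α ≠ 0 := ne_of_gt hα
  have h2ab0 : (2 * α - β) ≠ 0 := ne_of_gt h2ab
  have hq1 : (0:ℝ) < 2 * α ^ 2 - β ^ 2 := by nlinarith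
  have hq2 : (0:ℝ) < 4 * α ^ 2 - β ^ 2 := by nlinarith
  have hq10 : (2 * α ^ 2 - β ^ 2) ≠ 0 := ne_of_gt hq1
  have hq20 : (4 * α ^ 2 - β ^ 2) ≠ 0 := ne_of_gt hq2
  have hE0 : (∑ θ, P θ * D θ) ≠ 0 := ne_of_gt hED
  -- sum expansion
  have hsum : (∑ θ, P θ *
        ((D θ / (2 * α) +
            β * (∑ θ', P θ' * D θ') / (2 * α * (2 * α - β))) -
          pd * (2 * α ^ 2 - β ^ 2) / (4 * α ^ 2 - β ^ 2)) ^ 2)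
      = (∑ θ, P θ * D θ ^ 2) / (4 * α ^ 2) +
        (∑ θ, P θ * D θ) * (β * (∑ θ, P θ * D θ) / (2 * α * (2 * α - β)) -
            pd * (2 * α ^ 2 - β ^ 2) / (4 * α ^ 2 - β ^ 2)) / α +
        (β * (∑ θ, P θ * D θ) / (2 * α * (2 * α - β)) -
            pd * (2 * α ^ 2 - β ^ 2) / (4 * α ^ 2 - β ^ 2)) ^ 2 := by
    calc (∑ θ, P θ *
        ((D θ / (2 * α) +
            β * (∑ θ', P θ' * D θ') / (2 * α * (2 * α - β))) -
          pd * (2 * α ^ 2 - β ^ 2) / (4 * α ^ 2 - β ^ 2)) ^ 2)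
        = ∑ θ, (P θ * D θ ^ 2 * (1 / (4 * α ^ 2)) +
            P θ * D θ * ((β * (∑ θ', P θ' * D θ') / (2 * α * (2 * α - β)) -
              pd * (2 * α ^ 2 - β ^ 2) / (4 * α ^ 2 - β ^ 2)) / α) +
            P θ * ((β * (∑ θ', P θ' * D θ') / (2 * α * (2 * α - β)) -
              pd * (2 * α ^ 2 - β ^ 2) / (4 * α ^ 2 - β ^ 2)) ^ 2)) := by
          refine Finset.sum_congr rfl fun θ _ => ?_
          field_simp
          ring
      _ = (∑ θ, P θ * D θ ^ 2) * (1 / (4 * α ^ 2)) +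
            (∑ θ, P θ * D θ) * ((β * (∑ θ', P θ' * D θ') / (2 * α * (2 * α - β)) -
              pd * (2 * α ^ 2 - β ^ 2) / (4 * α ^ 2 - β ^ 2)) / α) +
            (∑ θ, P θ) * ((β * (∑ θ', P θ' * D θ') / (2 * α * (2 * α - β)) -
              pd * (2 * α ^ 2 - β ^ 2) / (4 * α ^ 2 - β ^ 2)) ^ 2) := by
          rw [Finset.sum_add_distrib, Finset.sum_add_distrib, ← Finset.sum_mul,
            ← Finset.sum_mul, ← Finset.sum_mul]
      _ = _ := by rw [hPsum]; ring
  set E := ∑ θ, P θ * D θ with hEdef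
  set E2 := ∑ θ, P θ * D θ ^ 2 with hE2def
  -- nonnegativity of the radicand
  have hVar' : (E2 - E ^ 2) * (2 * α - β) ^ 2 ≤ E ^ 2 * (4 * α ^ 2) :=
    (le_div_iff₀ (by positivity)).mp hVar
  have h4 : (0:ℝ) < 4 * α ^ 2 * E ^ 2 := by
    have h1 : 0 < α ^ 2 := pow_pos hα 2
    have h2 : 0 < E ^ 2 := pow_pos hED 2
    nlinarith
  have hr0 : 0 ≤ 1 - (2 * α - β) ^ 2 * (E2 - E ^ 2) / (4 * α ^ 2 * E ^ 2) := by
    rw [sub_nonneg, div_le_one h4]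
    nlinarith [hVar']
  set s := Real.sqrt (1 - (2 * α - β) ^ 2 * (E2 - E ^ 2) / (4 * α ^ 2 * E ^ 2)) with hsdef
  have hs0 : 0 ≤ s := Real.sqrt_nonneg _
  have hs2 : s ^ 2 = 1 - (2 * α - β) ^ 2 * (E2 - E ^ 2) / (4 * α ^ 2 * E ^ 2) :=
    Real.sq_sqrt hr0
  have ht : (0:ℝ) < (2 * α ^ 2 - β ^ 2) / (4 * α ^ 2 - β ^ 2) := div_pos hq1 hq2
  have e1 : pd * ((2 * α ^ 2 - β ^ 2) / (4 * α ^ 2 - β ^ 2))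
      = pd * (2 * α ^ 2 - β ^ 2) / (4 * α ^ 2 - β ^ 2) := by ring
  have e2 : (2 * α + β) * E / (2 * α ^ 2 - β ^ 2) * (1 - s) *
        ((2 * α ^ 2 - β ^ 2) / (4 * α ^ 2 - β ^ 2)) = E / (2 * α - β) * (1 - s) := by
    have : α ^ 2 * 4 - β ^ 2 ≠ 0 := by linarith
    field_simp
    ring
  have e2' : (2 * α + β) * E / (2 * α ^ 2 - β ^ 2) * (1 + s) *
        ((2 * α ^ 2 - β ^ 2) / (4 * α ^ 2 - β ^ 2)) = E / (2 * α - β) * (1 + s) := by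
    have : α ^ 2 * 4 - β ^ 2 ≠ 0 := by linarith
    field_simp
    ring
  have hclt : pd * (2 * α ^ 2 - β ^ 2) / (4 * α ^ 2 - β ^ 2) <
      E / (2 * α - β) * (1 + s) := by
    rw [← e1, ← e2']
    exact (mul_lt_mul_iff_of_pos_right ht).mpr hlt
  rw [hsum]
  rw [stmt10_helper α β E E2 (pd * (2 * α ^ 2 - β ^ 2) / (4 * α ^ 2 - β ^ 2)) s
    hα hβ hαβ hED hs0 hs2 hclt]
  rw [← e1, ← e2, mul_le_mul_iff_of_pos_right ht]
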